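/- arXiv:1007.2905 — 7 statements merged into one kernel-verified Lean document; each statement's English description precedes it below -/
import Mathlib

section
/- Let 𝒜 ⊆ ℂ^{n×n} be a matrix *-algebra and let A ∈ 𝒜 be Hermitian. Then A is positive semidefinite if and only if ⟨A, B⟩ = trace(B*A) ≥ 0 for every positive semidefinite B ∈ 𝒜. (In other words, the cone of positive semidefinite matrices in 𝒜 is self-dual inside the real space of Hermitian elements of 𝒜.) -/
open Matrix ComplexOrder Polynomial

/-- conjugation by a unitary as an algebra hom -/
noncomputable def conjAlgHomAux {n : ℕ} (U : Matrix (Fin n) (Fin n) ℂ) (h1 : U * Uᴴ = 1) (h2 : Uᴴ * U = 1) :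
    Matrix (Fin n) (Fin n) ℂ →ₐ[ℂ] Matrix (Fin n) (Fin n) ℂ where
  toFun X := U * X * Uᴴ
  map_one' := by rw [mul_one, h1]
  map_mul' X Y := by
    simp only [mul_assoc]
    rw [← mul_assoc Uᴴ U, h2, one_mul]
  map_zero' := by simp
  map_add' X Y := by rw [mul_add, add_mul]
  commutes' c := by
    simp only [Algebra.algebraMap_eq_smul_one, mul_smul_comm, smul_mul_assoc, mul_one, h1]

lemma trace_nonneg_of_posSemidefAux {n : ℕ} {M : Matrix (Fin n) (Fin n) ℂ}
    (hM : M.PosSemidef) : 0 ≤ M.trace := by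
  obtain ⟨C, rfl⟩ : ∃ C : Matrix (Fin n) (Fin n) ℂ, M = Cᴴ * C :=
    by open scoped MatrixOrder in exact CStarAlgebra.nonneg_iff_eq_star_mul_self.mp hM.nonneg
  rw [Matrix.trace]
  refine Finset.sum_nonneg fun i _ => ?_
  rw [Matrix.diag_apply, Matrix.mul_apply]
  exact Finset.sum_nonneg fun j _ => by
    rw [Matrix.conjTranspose_apply]; exact star_mul_self_nonneg _

lemma aeval_mem_aux {n : ℕ} (𝒜 : Submodule ℂ (Matrix (Fin n) (Fin n) ℂ))
    (hmul : ∀ X ∈ 𝒜, ∀ Y ∈ 𝒜, X * Y ∈ 𝒜)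
    (A : Matrix (Fin n) (Fin n) ℂ) (hA : A ∈ 𝒜) (p : ℂ[X]) (hp : p.coeff 0 = 0) :
    aeval A p ∈ 𝒜 := by
  have hpow : ∀ k : ℕ, A ^ (k + 1) ∈ 𝒜 := by
    intro k
    induction k with
    | zero => simpa using hA
    | succ k ih => rw [pow_succ]; exact hmul _ ih _ hA
  rw [Polynomial.aeval_eq_sum_range]
  refine Submodule.sum_mem _ fun i _ => ?_
  rcases Nat.eq_zero_or_pos i with rfl | hi
  · rw [hp, zero_smul]; exact Submodule.zero_mem _
  · obtain ⟨k, rfl⟩ := Nat.exists_eq_add_of_lt hi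
    simpa using Submodule.smul_mem _ _ (hpow k)

/-- In a matrix *-algebra `𝒜`, a Hermitian element `A ∈ 𝒜` is
positive semidefinite if and only if `⟨A, B⟩ = trace (Bᴴ * A) ≥ 0` for every
positive semidefinite `B ∈ 𝒜` (self-duality of the PSD cone in `𝒜`). -/
theorem posSemidef_iff_trace_nonneg_of_mem_star_algebra {n : ℕ}
    (𝒜 : Submodule ℂ (Matrix (Fin n) (Fin n) ℂ))
    (hmul : ∀ X ∈ 𝒜, ∀ Y ∈ 𝒜, X * Y ∈ 𝒜)
    (hstar : ∀ X ∈ 𝒜, Xᴴ ∈ 𝒜)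
    (A : Matrix (Fin n) (Fin n) ℂ) (hA : A ∈ 𝒜) (hHerm : A.IsHermitian) :
    A.PosSemidef ↔ ∀ B ∈ 𝒜, B.PosSemidef → 0 ≤ (Bᴴ * A).trace := by
  constructor
  · intro hPSD B _ hB
    rw [hB.isHermitian]
    -- trace (B * A) = trace (sqrt A * B * sqrt A ᴴ) ≥ 0
    obtain ⟨S, hs, hSA⟩ : ∃ S : Matrix (Fin n) (Fin n) ℂ, S.PosSemidef ∧ S * S = A :=
      open scoped MatrixOrder in
      ⟨CFC.sqrt A, (CFC.sqrt_nonneg A).posSemidef, CFC.sqrt_mul_sqrt_self A hPSD.nonneg⟩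
    have : B * A = B * S * S := by
      rw [mul_assoc, hSA]
    rw [this, Matrix.trace_mul_cycle]
    have : S * B * S = S * B * Sᴴ := by
      rw [hs.isHermitian]
    rw [this]
    exact trace_nonneg_of_posSemidefAux (hB.mul_mul_conjTranspose_same _)
  · intro h
    set U : Matrix (Fin n) (Fin n) ℂ := (hHerm.eigenvectorUnitary : Matrix (Fin n) (Fin n) ℂ) with hUdef
    have h2 : Uᴴ * U = 1 := by
      simpa [Matrix.star_eq_conjTranspose] using
        Matrix.mem_unitaryGroup_iff'.mp hHerm.eigenvectorUnitary.2
    have h1 : U * Uᴴ = 1 := by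
      simpa [Matrix.star_eq_conjTranspose] using
        Matrix.mem_unitaryGroup_iff.mp hHerm.eigenvectorUnitary.2
    set e : Fin n → ℝ := hHerm.eigenvalues with he
    -- the polynomial interpolating the negative-part function
    set s : Finset ℂ := insert 0 (Finset.image (fun i => (e i : ℂ)) Finset.univ) with hs
    set f : ℂ → ℂ := fun z => ((max (-z.re) 0 : ℝ) : ℂ) with hf
    set p : ℂ[X] := Lagrange.interpolate s id f with hp
    have hinj : Set.InjOn id (s : Set ℂ) := Function.injective_id.injOn
    have heval : ∀ z ∈ s, p.eval z = f z := fun z hz =>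
      Lagrange.eval_interpolate_at_node f hinj hz
    have hp0 : p.coeff 0 = 0 := by
      rw [Polynomial.coeff_zero_eq_eval_zero, heval 0 (Finset.mem_insert_self _ _)]
      simp [hf]
    set m : Fin n → ℝ := fun i => max (-(e i)) 0 with hm
    have hevale : ∀ i, p.eval ((e i : ℂ)) = (m i : ℂ) := by
      intro i
      rw [heval _ (Finset.mem_insert_of_mem (Finset.mem_image_of_mem _ (Finset.mem_univ i)))]
      simp [hf, hm]
    -- N = p(A) is the negative part of A
    set N : Matrix (Fin n) (Fin n) ℂ := Polynomial.aeval A p with hN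
    have hNmem : N ∈ 𝒜 := aeval_mem_aux 𝒜 hmul A hA p hp0
    set D : Matrix (Fin n) (Fin n) ℂ := Matrix.diagonal (fun i => (e i : ℂ)) with hD
    have hAspec : A = U * D * Uᴴ := by
      have := hHerm.spectral_theorem
      simp [Matrix.star_eq_conjTranspose] at this
      exact this
    set φ := conjAlgHomAux U h1 h2 with hφ
    have hDdiag : D = Matrix.diagonalAlgHom ℂ (fun i => (e i : ℂ)) := rfl
    have hNeq : N = U * Matrix.diagonal (fun i => (m i : ℂ)) * Uᴴ := by
      have hAφ : A = φ D := by rw [hAspec]; rfl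
      rw [hN, hAφ, Polynomial.aeval_algHom_apply, hDdiag, Polynomial.aeval_algHom_apply]
      have : (Polynomial.aeval (fun i => (e i : ℂ)) p) = fun i => (m i : ℂ) := by
        funext i
        rw [← hevale i]
        simp [Polynomial.aeval_def, Polynomial.eval₂_eq_eval_map]
      rw [this]
      rfl
    have hNpsd : N.PosSemidef := by
      rw [hNeq]
      refine Matrix.PosSemidef.mul_mul_conjTranspose_same ?_ U
      refine Matrix.posSemidef_diagonal_iff.mpr fun i => ?_
      exact_mod_cast Complex.zero_le_real.mpr (le_max_right _ _)
    have htr : (Nᴴ * A).trace = ((∑ i, m i * e i : ℝ) : ℂ) := by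
      rw [hNpsd.isHermitian, hNeq, hAspec]
      have : U * Matrix.diagonal (fun i => (m i : ℂ)) * Uᴴ * (U * D * Uᴴ)
          = U * (Matrix.diagonal (fun i => (m i : ℂ)) * D) * Uᴴ := by
        simp only [Matrix.mul_assoc]
        rw [← Matrix.mul_assoc Uᴴ U, h2, Matrix.one_mul]
      rw [this, Matrix.trace_mul_cycle, ← Matrix.mul_assoc, h2, Matrix.one_mul,
        hD, Matrix.diagonal_mul_diagonal, Matrix.trace_diagonal]
      push_cast
      rfl
    have hge := h N hNmem hNpsd
    rw [htr] at hge
    have hsum : 0 ≤ ∑ i, m i * e i := Complex.zero_le_real.mp hge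
    have hkey : ∑ i, m i * e i = -∑ i, m i ^ 2 := by
      rw [← Finset.sum_neg_distrib]
      refine Finset.sum_congr rfl fun i _ => ?_
      rcases le_or_gt (e i) 0 with hle | hlt
      · have : m i = -(e i) := max_eq_left (by linarith)
        rw [this]; ring
      · have : m i = 0 := max_eq_right (by linarith)
        rw [this]; ring
    have hzero : ∑ i, m i ^ 2 = 0 := by
      have h' : ∑ i, m i ^ 2 ≤ 0 := by rw [hkey] at hsum; linarith
      have h'' : 0 ≤ ∑ i, m i ^ 2 := Finset.sum_nonneg fun i _ => sq_nonneg _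
      linarith
    have hmz : ∀ i, m i = 0 := by
      intro i
      have := (Finset.sum_eq_zero_iff_of_nonneg (fun i _ => sq_nonneg (m i))).mp hzero i
        (Finset.mem_univ i)
      exact pow_eq_zero_iff (by norm_num) |>.mp this
    refine hHerm.posSemidef_iff_eigenvalues_nonneg.mpr fun i => show (0:ℝ) ≤ e i from ?_
    have := hmz i
    rw [hm] at this
    simp only [max_eq_right_iff] at this
    by_contra hneg
    push_neg at hneg
    have : max (-(e i)) 0 = -(e i) := max_eq_left (by linarith)
    have := hmz i
    simp only [hm] at this
    rw [max_eq_left (by linarith : (0:ℝ) ≤ -(e i))] at this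
    linarith
end

section
/- Let V be a finite set and let y : 𝒫(V) → ℝ be a function on the power set of V with y(∅) = 1. Let M(y) be the 𝒫(V)×𝒫(V) matrix with entries M(y)_{S,T} = y(S ∪ T). If M(y) is positive semidefinite, then y is a convex combination of 0/1 liftings: there exist nonnegative weights λ_x, x ∈ {0,1}^V, summing to 1, such that y(S) = Σ_{x∈{0,1}^V} λ_x · Π_{v∈S} x_v for every S ⊆ V. Consequently M(y) is a convex combination of the rank-one moment matrices M(ŷ_x) where ŷ_x(S) = Π_{v∈S} x_v. -/
open Matrix

namespace MomentAux

variable {V : Type*} [Fintype V] [DecidableEq V]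

def mu (X S : Finset V) : ℝ := if X ⊆ S then (-1 : ℝ) ^ ((S \ X).card) else 0

omit [Fintype V] in
lemma sum_powerset_real (D : Finset V) :
    ∑ A ∈ D.powerset, ((-1 : ℝ)) ^ A.card = if D = ∅ then 1 else 0 := by
  have h := Finset.sum_powerset_neg_one_pow_card (x := D)
  have h2 : ((∑ m ∈ D.powerset, (-1 : ℤ) ^ m.card : ℤ) : ℝ) = if D = ∅ then 1 else 0 := by
    rw [h]; split <;> norm_num
  rw [← h2]; push_cast; rfl

lemma interval_alt (S U : Finset V) :
    ∑ X : Finset V, (if S ⊆ X ∧ X ⊆ U then ((-1 : ℝ)) ^ ((X \ S).card) else 0)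
      = if S = U then 1 else 0 := by
  by_cases hSU : S ⊆ U
  · have h1 : ∑ X : Finset V, (if S ⊆ X ∧ X ⊆ U then ((-1 : ℝ)) ^ ((X \ S).card) else 0)
        = ∑ X ∈ Finset.univ.filter (fun X => S ⊆ X ∧ X ⊆ U), ((-1 : ℝ)) ^ ((X \ S).card) := by
      rw [Finset.sum_filter]
    rw [h1]
    have h3 : ∑ X ∈ Finset.univ.filter (fun X => S ⊆ X ∧ X ⊆ U), ((-1 : ℝ)) ^ ((X \ S).card)
        = ∑ A ∈ (U \ S).powerset, ((-1 : ℝ)) ^ A.card := by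
      refine Finset.sum_nbij' (fun X => X \ S) (fun A => S ∪ A) ?_ ?_ ?_ ?_ ?_
      · intro X hX
        simp only [Finset.mem_filter, Finset.mem_univ, true_and] at hX
        exact Finset.mem_powerset.2 (Finset.sdiff_subset_sdiff hX.2 (Finset.Subset.refl S))
      · intro A hA
        rw [Finset.mem_powerset] at hA
        simp only [Finset.mem_filter, Finset.mem_univ, true_and]
        exact ⟨Finset.subset_union_left,
          Finset.union_subset hSU (hA.trans Finset.sdiff_subset)⟩
      · intro X hX
        simp only [Finset.mem_filter, Finset.mem_univ, true_and] at hX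
        exact Finset.union_sdiff_of_subset hX.1
      · intro A hA
        rw [Finset.mem_powerset] at hA
        show (S ∪ A) \ S = A
        rw [Finset.union_sdiff_left]
        exact Finset.sdiff_eq_self_of_disjoint
          ((Finset.disjoint_of_subset_left hA Finset.sdiff_disjoint))
      · intro X hX; rfl
    rw [h3, sum_powerset_real]
    by_cases h : S = U
    · simp [h]
    · rw [if_neg h, if_neg]
      intro hU
      exact h (Finset.Subset.antisymm hSU (Finset.sdiff_eq_empty_iff_subset.1 hU))
  · rw [if_neg (fun h => hSU (le_of_eq h))]
    apply Finset.sum_eq_zero; intro X _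
    rw [if_neg]; rintro ⟨h1, h2⟩; exact hSU (h1.trans h2)

lemma interval_alt' (S U : Finset V) :
    ∑ X : Finset V, (if S ⊆ X ∧ X ⊆ U then ((-1 : ℝ)) ^ ((U \ X).card) else 0)
      = if S = U then 1 else 0 := by
  have hterm : ∀ X : Finset V,
      (if S ⊆ X ∧ X ⊆ U then ((-1 : ℝ)) ^ ((U \ X).card) else 0)
        = ((-1 : ℝ)) ^ ((U \ S).card) *
          (if S ⊆ X ∧ X ⊆ U then ((-1 : ℝ)) ^ ((X \ S).card) else 0) := by
    intro X
    by_cases h : S ⊆ X ∧ X ⊆ U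
    · rw [if_pos h, if_pos h]
      obtain ⟨h1, h2⟩ := h
      have hc : (X \ S).card + (U \ X).card = (U \ S).card := by
        rw [Finset.card_sdiff_of_subset h1, Finset.card_sdiff_of_subset h2, Finset.card_sdiff_of_subset (h1.trans h2)]
        have := Finset.card_le_card h1
        have := Finset.card_le_card h2
        omega
      have h4 : ((-1 : ℝ)) ^ ((X \ S).card) * ((-1 : ℝ)) ^ ((X \ S).card) = 1 := by
        rw [← pow_add, ← two_mul, pow_mul]; norm_num
      calc ((-1 : ℝ)) ^ ((U \ X).card)
          = ((-1 : ℝ)) ^ ((U \ X).card) * (((-1 : ℝ)) ^ ((X \ S).card) * ((-1 : ℝ)) ^ ((X \ S).card)) := by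
            rw [h4, mul_one]
        _ = (((-1 : ℝ)) ^ ((X \ S).card) * ((-1 : ℝ)) ^ ((U \ X).card)) * ((-1 : ℝ)) ^ ((X \ S).card) := by ring
        _ = ((-1 : ℝ)) ^ ((U \ S).card) * ((-1 : ℝ)) ^ ((X \ S).card) := by rw [← pow_add, hc]
    · rw [if_neg h, if_neg h, mul_zero]
  rw [Finset.sum_congr rfl (fun X _ => hterm X), ← Finset.mul_sum, interval_alt]
  by_cases h : S = U
  · subst h; simp
  · simp [h]

lemma AW (X W : Finset V) :
    ∑ S : Finset V, (if S ⊆ W then mu X S else 0) = if X = W then 1 else 0 := by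
  rw [← interval_alt X W]
  refine Finset.sum_congr rfl fun S _ => ?_
  unfold mu
  by_cases h1 : X ⊆ S <;> by_cases h2 : S ⊆ W <;> simp [h1, h2]

lemma cU (X U : Finset V) :
    ∑ S : Finset V, ∑ T : Finset V,
      (if S ∪ T = U then mu X S * mu X T else 0) = mu X U := by
  have step1 : ∀ S T : Finset V,
      (if S ∪ T = U then mu X S * mu X T else 0)
        = ∑ W : Finset V, (if W ⊆ U then ((-1:ℝ)) ^ ((U \ W).card) else 0) *
            ((if S ⊆ W then mu X S else 0) * (if T ⊆ W then mu X T else 0)) := by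
    intro S T
    have := interval_alt' (S ∪ T) U
    calc (if S ∪ T = U then mu X S * mu X T else 0)
        = (mu X S * mu X T) * (if S ∪ T = U then (1:ℝ) else 0) := by
          split <;> ring
      _ = (mu X S * mu X T) *
            ∑ W : Finset V, (if S ∪ T ⊆ W ∧ W ⊆ U then ((-1:ℝ)) ^ ((U \ W).card) else 0) := by
          rw [this]
      _ = ∑ W : Finset V, (mu X S * mu X T) *
            (if S ∪ T ⊆ W ∧ W ⊆ U then ((-1:ℝ)) ^ ((U \ W).card) else 0) := by
          rw [Finset.mul_sum]
      _ = _ := by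
          refine Finset.sum_congr rfl fun W _ => ?_
          by_cases hS : S ⊆ W <;> by_cases hT : T ⊆ W <;> by_cases hW : W ⊆ U <;>
            simp [hS, hT, hW, Finset.union_subset_iff] <;> ring
  calc ∑ S : Finset V, ∑ T : Finset V, (if S ∪ T = U then mu X S * mu X T else 0)
      = ∑ S : Finset V, ∑ T : Finset V, ∑ W : Finset V,
          (if W ⊆ U then ((-1:ℝ)) ^ ((U \ W).card) else 0) *
            ((if S ⊆ W then mu X S else 0) * (if T ⊆ W then mu X T else 0)) := by
        exact Finset.sum_congr rfl fun S _ => Finset.sum_congr rfl fun T _ => step1 S T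
    _ = ∑ S : Finset V, ∑ W : Finset V, ∑ T : Finset V,
          (if W ⊆ U then ((-1:ℝ)) ^ ((U \ W).card) else 0) *
            ((if S ⊆ W then mu X S else 0) * (if T ⊆ W then mu X T else 0)) := by
        exact Finset.sum_congr rfl fun S _ => Finset.sum_comm
    _ = ∑ W : Finset V, ∑ S : Finset V, ∑ T : Finset V,
          (if W ⊆ U then ((-1:ℝ)) ^ ((U \ W).card) else 0) *
            ((if S ⊆ W then mu X S else 0) * (if T ⊆ W then mu X T else 0)) := by
        exact Finset.sum_comm
    _ = ∑ W : Finset V, (if W ⊆ U then ((-1:ℝ)) ^ ((U \ W).card) else 0) *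
          ((∑ S : Finset V, (if S ⊆ W then mu X S else 0)) *
            (∑ T : Finset V, (if T ⊆ W then mu X T else 0))) := by
        refine Finset.sum_congr rfl fun W _ => ?_
        rw [Finset.sum_mul_sum, Finset.mul_sum]
        refine Finset.sum_congr rfl fun S _ => ?_
        rw [Finset.mul_sum]
    _ = ∑ W : Finset V, (if W ⊆ U then ((-1:ℝ)) ^ ((U \ W).card) else 0) *
          ((if X = W then (1:ℝ) else 0) * (if X = W then (1:ℝ) else 0)) := by
        refine Finset.sum_congr rfl fun W _ => ?_
        rw [AW]
    _ = mu X U := by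
        rw [Finset.sum_eq_single X]
        · simp [mu]
        · intro W _ hW
          simp [Ne.symm hW]
        · intro h; exact absurd (Finset.mem_univ X) h

lemma key (X : Finset V) (f : Finset V → ℝ) :
    ∑ S : Finset V, ∑ T : Finset V, mu X S * mu X T * f (S ∪ T)
      = ∑ U : Finset V, mu X U * f U := by
  have h1 : ∑ S : Finset V, ∑ T : Finset V, mu X S * mu X T * f (S ∪ T)
      = ∑ p : Finset V × Finset V, mu X p.1 * mu X p.2 * f (p.1 ∪ p.2) := by
    rw [Fintype.sum_prod_type]
  rw [h1, ← Finset.sum_fiberwise Finset.univ (fun p : Finset V × Finset V => p.1 ∪ p.2)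
    (fun p => mu X p.1 * mu X p.2 * f (p.1 ∪ p.2))]
  refine Finset.sum_congr rfl fun U _ => ?_
  have h2 : ∑ p ∈ Finset.univ.filter (fun p : Finset V × Finset V => p.1 ∪ p.2 = U),
      mu X p.1 * mu X p.2 * f (p.1 ∪ p.2)
      = (∑ p ∈ Finset.univ.filter (fun p : Finset V × Finset V => p.1 ∪ p.2 = U),
          mu X p.1 * mu X p.2) * f U := by
    rw [Finset.sum_mul]
    refine Finset.sum_congr rfl fun p hp => ?_
    rw [(Finset.mem_filter.1 hp).2]
  rw [h2]
  have h3 : ∑ p ∈ Finset.univ.filter (fun p : Finset V × Finset V => p.1 ∪ p.2 = U),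
      mu X p.1 * mu X p.2 = mu X U := by
    rw [Finset.sum_filter, Fintype.sum_prod_type]
    exact cU X U
  rw [h3]

def toSet (x : V → Bool) : Finset V := Finset.univ.filter (fun v => x v)

lemma toSet_bij : Function.Bijective (toSet (V := V)) := by
  constructor
  · intro x x' h
    funext v
    have : (v ∈ toSet x) = (v ∈ toSet x') := by rw [h]
    simpa [toSet] using this
  · intro Z
    refine ⟨fun v => decide (v ∈ Z), ?_⟩
    ext v; simp [toSet]

lemma prod_ind (S : Finset V) (x : V → Bool) :
    (∏ v ∈ S, (if x v then (1 : ℝ) else 0)) = if S ⊆ toSet x then 1 else 0 := by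
  by_cases h : S ⊆ toSet x
  · rw [if_pos h]
    apply Finset.prod_eq_one
    intro v hv
    have := h hv
    simp only [toSet, Finset.mem_filter] at this
    simp [this.2]
  · rw [if_neg h]
    obtain ⟨v, hv, hv'⟩ := Finset.not_subset.1 h
    refine Finset.prod_eq_zero hv ?_
    simp only [toSet, Finset.mem_filter, Finset.mem_univ, true_and] at hv'
    simp [hv']

lemma inversion (y : Finset V → ℝ) (S : Finset V) :
    ∑ Z : Finset V, (if S ⊆ Z then (1:ℝ) else 0) * (∑ U : Finset V, mu Z U * y U) = y S := by
  calc ∑ Z : Finset V, (if S ⊆ Z then (1:ℝ) else 0) * (∑ U : Finset V, mu Z U * y U)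
      = ∑ Z : Finset V, ∑ U : Finset V, (if S ⊆ Z then (1:ℝ) else 0) * (mu Z U * y U) := by
        exact Finset.sum_congr rfl fun Z _ => Finset.mul_sum _ _ _
    _ = ∑ U : Finset V, ∑ Z : Finset V, (if S ⊆ Z then (1:ℝ) else 0) * (mu Z U * y U) := by
        exact Finset.sum_comm
    _ = ∑ U : Finset V, (∑ Z : Finset V,
          (if S ⊆ Z ∧ Z ⊆ U then ((-1:ℝ)) ^ ((U \ Z).card) else 0)) * y U := by
        refine Finset.sum_congr rfl fun U _ => ?_
        rw [Finset.sum_mul]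
        refine Finset.sum_congr rfl fun Z _ => ?_
        unfold mu
        by_cases h1 : S ⊆ Z <;> by_cases h2 : Z ⊆ U <;> simp [h1, h2]
    _ = ∑ U : Finset V, (if S = U then (1:ℝ) else 0) * y U := by
        refine Finset.sum_congr rfl fun U _ => ?_
        rw [interval_alt']
    _ = y S := by
        rw [Finset.sum_eq_single S] <;> simp +contextual [eq_comm]

end MomentAux


open MomentAux

/-- A combinatorial moment matrix `M(y)` with `y ∅ = 1` which is
positive semidefinite is a convex combination of the moment matrices of 0/1
liftings: there are nonnegative weights `lam x`, `x ∈ {0,1}^V`, summing to `1`,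
with `y S = ∑ x, lam x * ∏_{v ∈ S} x v`, and consequently
`M(y) = ∑ x, lam x • M(ŷ_x)`. -/
theorem moment_matrix_convex_combination_of_liftings {V : Type*} [Fintype V] [DecidableEq V]
    (y : Finset V → ℝ) (hy : y ∅ = 1)
    (hpsd : (Matrix.of fun S T : Finset V => y (S ∪ T)).PosSemidef) :
    ∃ lam : (V → Bool) → ℝ,
      (∀ x, 0 ≤ lam x) ∧
      (∑ x : V → Bool, lam x = 1) ∧
      (∀ S : Finset V,
        y S = ∑ x : V → Bool, lam x * ∏ v ∈ S, (if x v then (1 : ℝ) else 0)) ∧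
      ((Matrix.of fun S T : Finset V => y (S ∪ T)) =
        ∑ x : V → Bool, lam x •
          Matrix.of (fun S T : Finset V =>
            ∏ v ∈ S ∪ T, (if x v then (1 : ℝ) else 0))) := by
  set lam : (V → Bool) → ℝ := fun x => ∑ U : Finset V, mu (toSet x) U * y U with hlam
  have h3 : ∀ S : Finset V,
      y S = ∑ x : V → Bool, lam x * ∏ v ∈ S, (if x v then (1 : ℝ) else 0) := by
    intro S
    rw [← inversion y S, ← Fintype.sum_bijective (toSet (V := V)) toSet_bij _ _ (fun x => ?_)]
    rw [prod_ind, hlam]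
    ring
  have h1 : ∀ x, 0 ≤ lam x := by
    intro x
    have h := hpsd.dotProduct_mulVec_nonneg (fun S => mu (toSet x) S)
    have heq : star (fun S => mu (toSet x) S) ⬝ᵥ
        ((Matrix.of fun S T : Finset V => y (S ∪ T)) *ᵥ (fun S => mu (toSet x) S))
        = lam x := by
      show _ = ∑ U : Finset V, mu (toSet x) U * y U
      rw [← key (toSet x) y]
      simp only [dotProduct, Matrix.mulVec, Matrix.of_apply, Pi.star_apply, star_trivial]
      refine Finset.sum_congr rfl fun S _ => ?_
      rw [Finset.mul_sum]
      refine Finset.sum_congr rfl fun T _ => ?_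
      ring
    rw [heq] at h
    exact h
  have h2 : ∑ x : V → Bool, lam x = 1 := by
    have := h3 ∅
    simpa [hy] using this.symm
  refine ⟨lam, h1, h2, h3, ?_⟩
  ext S T
  simp only [Matrix.of_apply, Matrix.sum_apply, Matrix.smul_apply, smul_eq_mul]
  exact h3 (S ∪ T)
end

section
/- Let Γ = (V, E) be a finite simple graph. Then the independence number α(Γ) equals the maximum of Σ_{v∈V} y({v}) over all functions y : 𝒫(V) → ℝ satisfying: y(∅) = 1; y(S) = 0 for every S ⊆ V that contains both endpoints of some edge of Γ; and the moment matrix M(y), with entries M(y)_{S,T} = y(S ∪ T), is positive semidefinite. -/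
open Matrix

section Aux
open Finset
variable {V : Type*} [Fintype V] [DecidableEq V]

lemma pow_sum_real (x : Finset V) :
    (∑ m ∈ x.powerset, (-1:ℝ)^m.card) = if x = ∅ then 1 else 0 := by
  have := Finset.sum_powerset_neg_one_pow_card (x := x)
  have h2 : ((∑ m ∈ x.powerset, (-1:ℤ)^m.card : ℤ) : ℝ)
      = ∑ m ∈ x.powerset, (-1:ℝ)^m.card := by push_cast; rfl
  rw [← h2, this]
  split <;> norm_num

/-- alternating sum over an interval in the subset lattice -/
lemma alt_sum (S B : Finset V) :
    ∑ A : Finset V, (if S ⊆ A ∧ A ⊆ B then (-1:ℝ)^A.card else 0)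
      = if S = B then (-1:ℝ)^S.card else 0 := by
  by_cases hSB : S ⊆ B
  · rw [← Finset.sum_filter]
    have key : ∑ A ∈ Finset.univ.filter (fun A => S ⊆ A ∧ A ⊆ B), (-1:ℝ)^A.card
        = ∑ C ∈ (B \ S).powerset, (-1:ℝ)^(C.card + S.card) := by
      refine Finset.sum_nbij' (fun A => A \ S) (fun C => C ∪ S) ?_ ?_ ?_ ?_ ?_
      · intro A hA
        simp only [mem_filter, mem_univ, true_and] at hA
        exact Finset.mem_powerset.2 (Finset.sdiff_subset_sdiff hA.2 (subset_refl _))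
      · intro C hC
        simp only [mem_filter, mem_univ, true_and, Finset.mem_powerset] at *
        exact ⟨Finset.subset_union_right, Finset.union_subset (hC.trans (Finset.sdiff_subset)) hSB⟩
      · intro A hA
        simp only [mem_filter, mem_univ, true_and] at hA
        exact Finset.sdiff_union_of_subset hA.1
      · intro C hC
        simp only [Finset.mem_powerset] at hC
        exact Finset.union_sdiff_cancel_right (Finset.sdiff_disjoint.mono_left hC)
      · intro A hA
        simp only [mem_filter, mem_univ, true_and] at hA
        rw [Finset.card_sdiff_of_subset hA.1, Nat.sub_add_cancel (Finset.card_le_card hA.1)]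
    rw [key]
    have : ∑ C ∈ (B \ S).powerset, (-1:ℝ)^(C.card + S.card)
        = (∑ C ∈ (B \ S).powerset, (-1:ℝ)^C.card) * (-1:ℝ)^S.card := by
      rw [Finset.sum_mul]; exact Finset.sum_congr rfl fun C _ => (pow_add _ _ _)
    rw [this, pow_sum_real]
    simp only [Finset.sdiff_eq_empty_iff_subset]
    by_cases h : B ⊆ S
    · rw [if_pos h, if_pos (Finset.Subset.antisymm hSB h), one_mul]
    · rw [if_neg h, if_neg (by rintro rfl; exact h (subset_refl _)), zero_mul]
  · rw [if_neg (by rintro rfl; exact hSB (subset_refl _))]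
    refine Finset.sum_eq_zero fun A _ => ?_
    rw [if_neg]
    rintro ⟨h1, h2⟩
    exact hSB (h1.trans h2)

noncomputable def lamAux (y : Finset V → ℝ) (A : Finset V) : ℝ :=
  ∑ B : Finset V, if A ⊆ B then (-1:ℝ)^(A.card + B.card) * y B else 0

lemma lam_inversion (y : Finset V → ℝ) (S : Finset V) :
    ∑ A : Finset V, (if S ⊆ A then lamAux y A else 0) = y S := by
  have h1 : ∀ A : Finset V, (if S ⊆ A then lamAux y A else 0)
      = ∑ B : Finset V, (if S ⊆ A ∧ A ⊆ B then (-1:ℝ)^A.card * ((-1:ℝ)^B.card * y B) else 0) := by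
    intro A
    unfold lamAux
    split
    · refine Finset.sum_congr rfl fun B _ => ?_
      by_cases h : A ⊆ B
      · rw [if_pos h, if_pos ⟨by assumption, h⟩, pow_add]; ring
      · rw [if_neg h, if_neg (fun hc => h hc.2)]
    · symm
      refine Finset.sum_eq_zero fun B _ => if_neg (fun hc => by tauto)
  calc ∑ A : Finset V, (if S ⊆ A then lamAux y A else 0)
      = ∑ A : Finset V, ∑ B : Finset V,
          (if S ⊆ A ∧ A ⊆ B then (-1:ℝ)^A.card * ((-1:ℝ)^B.card * y B) else 0) :=
        Finset.sum_congr rfl fun A _ => h1 A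
    _ = ∑ B : Finset V, ∑ A : Finset V,
          (if S ⊆ A ∧ A ⊆ B then (-1:ℝ)^A.card * ((-1:ℝ)^B.card * y B) else 0) :=
        Finset.sum_comm
    _ = ∑ B : Finset V, (if S = B then (-1:ℝ)^S.card else 0) * ((-1:ℝ)^B.card * y B) := by
        refine Finset.sum_congr rfl fun B _ => ?_
        rw [← alt_sum S B, Finset.sum_mul]
        refine Finset.sum_congr rfl fun A _ => ?_
        split <;> simp
    _ = y S := by
        rw [Finset.sum_eq_single S]
        · rw [if_pos rfl, ← mul_assoc, ← pow_add, Even.neg_one_pow ⟨S.card, by ring⟩, one_mul]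
        · intro B _ hB
          rw [if_neg (fun h => hB h.symm), zero_mul]
        · intro h; exact absurd (Finset.mem_univ S) h

lemma count_lemma (A B : Finset V) :
    ∑ S : Finset V, ∑ T : Finset V,
        (if S ∪ T = B ∧ A ⊆ S ∧ A ⊆ T then (-1:ℝ)^(S.card + T.card) else 0)
      = if A ⊆ B then (-1:ℝ)^(A.card + B.card) else 0 := by
  have inner : ∀ S : Finset V,
      ∑ T : Finset V, (if S ∪ T = B ∧ A ⊆ S ∧ A ⊆ T then (-1:ℝ)^(S.card + T.card) else 0)
        = if S = A ∧ A ⊆ B then (-1:ℝ)^(A.card + B.card) else 0 := by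
    intro S
    by_cases hS : A ⊆ S ∧ S ⊆ B
    · obtain ⟨hAS, hSB⟩ := hS
      have equiv : ∀ T : Finset V,
          (S ∪ T = B ∧ A ⊆ S ∧ A ⊆ T) ↔ ((B \ S ∪ A) ⊆ T ∧ T ⊆ B) := by
        intro T
        constructor
        · rintro ⟨hu, -, hAT⟩
          refine ⟨Finset.union_subset ?_ hAT, hu ▸ Finset.subset_union_right⟩
          intro x hx
          rw [Finset.mem_sdiff] at hx
          have hxST : x ∈ S ∪ T := by rw [hu]; exact hx.1
          rcases Finset.mem_union.1 hxST with h | h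
          · exact absurd h hx.2
          · exact h
        · rintro ⟨h1, h2⟩
          have hAT : A ⊆ T := (Finset.subset_union_right).trans h1
          refine ⟨?_, hAS, hAT⟩
          apply Finset.Subset.antisymm (Finset.union_subset hSB h2)
          intro x hx
          by_cases hxS : x ∈ S
          · exact Finset.mem_union_left _ hxS
          · exact Finset.mem_union_right _ (h1 (Finset.mem_union_left _ (Finset.mem_sdiff.2 ⟨hx, hxS⟩)))
      have step : ∑ T : Finset V, (if S ∪ T = B ∧ A ⊆ S ∧ A ⊆ T then (-1:ℝ)^(S.card + T.card) else 0)
          = (-1:ℝ)^S.card * ∑ T : Finset V, (if (B \ S ∪ A) ⊆ T ∧ T ⊆ B then (-1:ℝ)^T.card else 0) := by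
        rw [Finset.mul_sum]
        refine Finset.sum_congr rfl fun T _ => ?_
        by_cases h : S ∪ T = B ∧ A ⊆ S ∧ A ⊆ T
        · rw [if_pos h, if_pos ((equiv T).1 h), ← pow_add]
        · rw [if_neg h, if_neg (fun hc => h ((equiv T).2 hc)), mul_zero]
      rw [step, alt_sum]
      have hcond : (B \ S ∪ A = B) ↔ S = A := by
        constructor
        · intro h
          refine Finset.Subset.antisymm ?_ hAS
          intro x hxS
          have hx : x ∈ B \ S ∪ A := by rw [h]; exact hSB hxS
          rcases Finset.mem_union.1 hx with hh | hh
          · exact absurd hxS (Finset.mem_sdiff.1 hh).2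
          · exact hh
        · rintro rfl
          exact Finset.sdiff_union_of_subset hSB
      by_cases h : S = A
      · rw [if_pos (hcond.2 h), if_pos ⟨h, h ▸ hSB⟩, hcond.2 h, h, ← pow_add]
      · have h1 : ¬(B \ S ∪ A = B) := fun hc => h (hcond.1 hc)
        have h2 : ¬(S = A ∧ A ⊆ B) := fun hc => h hc.1
        rw [if_neg h1, mul_zero, if_neg h2]
    · have h2 : ¬(S = A ∧ A ⊆ B) := by
        rintro ⟨rfl, hc⟩
        exact hS ⟨Finset.Subset.refl _, hc⟩
      rw [if_neg h2]
      refine Finset.sum_eq_zero fun T _ => if_neg ?_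
      rintro ⟨hu, hAS, -⟩
      exact hS ⟨hAS, hu ▸ Finset.subset_union_left⟩
  rw [Finset.sum_congr rfl fun S _ => inner S]
  by_cases hAB : A ⊆ B
  · simp only [hAB, and_true]
    rw [Finset.sum_ite_eq' Finset.univ A (fun _ => (-1:ℝ)^(A.card + B.card))]
    simp [hAB]
  · simp [hAB]

lemma lam_nonneg (y : Finset V → ℝ)
    (hP : (Matrix.of fun S T : Finset V => y (S ∪ T)).PosSemidef) (A : Finset V) :
    0 ≤ lamAux y A := by
  set x : Finset V → ℝ := fun S => if A ⊆ S then (-1:ℝ)^S.card else 0 with hx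
  have h := hP.dotProduct_mulVec_nonneg x
  have hstar : star x = x := star_trivial x
  rw [hstar] at h
  have key : x ⬝ᵥ ((Matrix.of fun S T : Finset V => y (S ∪ T)) *ᵥ x) = lamAux y A := by
    simp only [dotProduct, Matrix.mulVec, Matrix.of_apply, Finset.mul_sum]
    calc ∑ S : Finset V, ∑ T : Finset V, x S * (y (S ∪ T) * x T)
        = ∑ S : Finset V, ∑ T : Finset V,
            (if A ⊆ S ∧ A ⊆ T then (-1:ℝ)^(S.card + T.card) * y (S ∪ T) else 0) := by
          refine Finset.sum_congr rfl fun S _ => Finset.sum_congr rfl fun T _ => ?_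
          rw [hx]
          by_cases h1 : A ⊆ S <;> by_cases h2 : A ⊆ T <;>
            simp [h1, h2, pow_add] <;> ring
      _ = ∑ S : Finset V, ∑ T : Finset V, ∑ B : Finset V,
            (if S ∪ T = B ∧ A ⊆ S ∧ A ⊆ T then (-1:ℝ)^(S.card + T.card) * y B else 0) := by
          refine Finset.sum_congr rfl fun S _ => Finset.sum_congr rfl fun T _ => ?_
          rw [Finset.sum_eq_single (S ∪ T)]
          · by_cases h1 : A ⊆ S ∧ A ⊆ T
            · rw [if_pos h1, if_pos ⟨rfl, h1⟩]
            · rw [if_neg h1, if_neg (fun hc => h1 hc.2)]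
          · intro B _ hB
            exact if_neg (fun hc => hB hc.1.symm)
          · intro hc; exact absurd (Finset.mem_univ _) hc
      _ = ∑ B : Finset V, ∑ S : Finset V, ∑ T : Finset V,
            (if S ∪ T = B ∧ A ⊆ S ∧ A ⊆ T then (-1:ℝ)^(S.card + T.card) * y B else 0) := by
          exact Eq.trans (Finset.sum_congr rfl fun S _ => Finset.sum_comm) Finset.sum_comm
      _ = ∑ B : Finset V,
            (∑ S : Finset V, ∑ T : Finset V,
              (if S ∪ T = B ∧ A ⊆ S ∧ A ⊆ T then (-1:ℝ)^(S.card + T.card) else 0)) * y B := by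
          refine Finset.sum_congr rfl fun B _ => ?_
          rw [Finset.sum_mul]
          refine Finset.sum_congr rfl fun S _ => ?_
          rw [Finset.sum_mul]
          refine Finset.sum_congr rfl fun T _ => ?_
          rw [ite_mul, zero_mul]
      _ = ∑ B : Finset V, (if A ⊆ B then (-1:ℝ)^(A.card + B.card) else 0) * y B := by
          refine Finset.sum_congr rfl fun B _ => ?_
          rw [count_lemma]
      _ = lamAux y A := by
          refine Finset.sum_congr rfl fun B _ => ?_
          rw [ite_mul, zero_mul]
  rw [key] at h
  exact h

end Aux

/-- The independence number of a finite simple graph `Γ` equals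
the maximum of `∑_v y {v}` over all `y : 𝒫(V) → ℝ` with `y ∅ = 1`, `y S = 0`
whenever `S` contains an edge, and positive semidefinite moment matrix
`M(y)_{S,T} = y (S ∪ T)`. -/
theorem independence_number_eq_max_moment_sdp {V : Type*} [Fintype V] [DecidableEq V]
    (Γ : SimpleGraph V) (a : ℕ)
    (ha : IsGreatest
      {k : ℕ | ∃ s : Finset V, (∀ u ∈ s, ∀ v ∈ s, ¬ Γ.Adj u v) ∧ s.card = k} a) :
    IsGreatest
      {r : ℝ | ∃ y : Finset V → ℝ,
        y ∅ = 1 ∧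
        (∀ S : Finset V, (∃ u ∈ S, ∃ v ∈ S, Γ.Adj u v) → y S = 0) ∧
        (Matrix.of fun S T : Finset V => y (S ∪ T)).PosSemidef ∧
        r = ∑ v : V, y {v}}
      (a : ℝ) := by
  constructor
  · -- membership: use the maximum independent set
    obtain ⟨s, hs_ind, hs_card⟩ := ha.1
    refine ⟨fun S => if S ⊆ s then (1:ℝ) else 0, by simp, ?_, Matrix.PosSemidef.of_dotProduct_mulVec_nonneg ?_ ?_, ?_⟩
    · rintro S ⟨u, hu, v, hv, huv⟩
      exact if_neg (fun hSs => hs_ind u (hSs hu) v (hSs hv) huv)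
    · -- Hermitian
      ext S T
      simp [Matrix.conjTranspose_apply, Finset.union_comm]
    · -- quadratic form
      intro x
      have hstar : star x = x := star_trivial x
      rw [hstar]
      have key : x ⬝ᵥ ((Matrix.of fun S T : Finset V =>
            if S ∪ T ⊆ s then (1:ℝ) else 0) *ᵥ x)
          = (∑ S : Finset V, (if S ⊆ s then x S else 0))
            * (∑ T : Finset V, (if T ⊆ s then x T else 0)) := by
        rw [Finset.sum_mul_sum]
        simp only [dotProduct, Matrix.mulVec, Matrix.of_apply, Finset.mul_sum]
        refine Finset.sum_congr rfl fun S _ => Finset.sum_congr rfl fun T _ => ?_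
        by_cases h1 : S ⊆ s <;> by_cases h2 : T ⊆ s
        · rw [if_pos (Finset.union_subset h1 h2), if_pos h1, if_pos h2]; ring
        · rw [if_neg (fun hc => h2 (Finset.union_subset_iff.1 hc).2), if_pos h1, if_neg h2]; ring
        · rw [if_neg (fun hc => h1 (Finset.union_subset_iff.1 hc).1), if_neg h1, if_pos h2]; ring
        · rw [if_neg (fun hc => h1 (Finset.union_subset_iff.1 hc).1), if_neg h1, if_neg h2]; ring
      rw [key]
      exact mul_self_nonneg _
    · -- value
      have : ∀ v : V, (if {v} ⊆ s then (1:ℝ) else 0) = (if v ∈ s then (1:ℝ) else 0) := by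
        intro v; simp [Finset.singleton_subset_iff]
      rw [Finset.sum_congr rfl fun v _ => this v, Finset.sum_ite_mem,
        Finset.univ_inter, Finset.sum_const, ← hs_card]
      simp
  · -- upper bound
    rintro r ⟨y, hy0, hyE, hyP, rfl⟩
    have hnn : ∀ A, 0 ≤ lamAux y A := lam_nonneg y hyP
    have hinv := lam_inversion y
    have hzero : ∀ A : Finset V, (¬ ∀ u ∈ A, ∀ v ∈ A, ¬Γ.Adj u v) → lamAux y A = 0 := by
      intro A hA
      push_neg at hA
      obtain ⟨u, hu, v, hv, huv⟩ := hA
      have h2 : ∑ C : Finset V, (if {u, v} ⊆ C then lamAux y C else 0) = 0 := by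
        rw [hinv]
        exact hyE _ ⟨u, by simp, v, by simp, huv⟩
      have h3 := (Finset.sum_eq_zero_iff_of_nonneg (fun C _ => by
        by_cases h : ({u, v} : Finset V) ⊆ C
        · rw [if_pos h]; exact hnn C
        · rw [if_neg h])).1 h2 A (Finset.mem_univ A)
      rwa [if_pos (by intro x hx; rcases Finset.mem_insert.1 hx with rfl | hx
                      · exact hu
                      · rw [Finset.mem_singleton.1 hx]; exact hv)] at h3
    have hcard : ∀ A : Finset V, lamAux y A ≠ 0 → (A.card : ℝ) ≤ (a : ℝ) := by
      intro A hA
      have hind : ∀ u ∈ A, ∀ v ∈ A, ¬Γ.Adj u v := by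
        by_contra hc; exact hA (hzero A hc)
      exact_mod_cast Nat.cast_le.2 (ha.2 ⟨A, hind, rfl⟩)
    calc ∑ v : V, y {v}
        = ∑ v : V, ∑ A : Finset V, (if {v} ⊆ A then lamAux y A else 0) :=
          Finset.sum_congr rfl fun v _ => (hinv {v}).symm
      _ = ∑ A : Finset V, (A.card : ℝ) * lamAux y A := by
          rw [Finset.sum_comm]
          refine Finset.sum_congr rfl fun A _ => ?_
          have : ∀ v : V, (if {v} ⊆ A then lamAux y A else 0)
              = (if v ∈ A then lamAux y A else 0) := by
            intro v; simp [Finset.singleton_subset_iff]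
          rw [Finset.sum_congr rfl fun v _ => this v, Finset.sum_ite_mem,
            Finset.univ_inter, Finset.sum_const, nsmul_eq_mul]
      _ ≤ ∑ A : Finset V, (a : ℝ) * lamAux y A := by
          refine Finset.sum_le_sum fun A _ => ?_
          by_cases h : lamAux y A = 0
          · simp [h]
          · exact mul_le_mul_of_nonneg_right (hcard A h) (hnn A)
      _ = (a : ℝ) * ∑ A : Finset V, lamAux y A := (Finset.mul_sum _ _ _).symm
      _ = (a : ℝ) := by
          have h1 : ∑ A : Finset V, lamAux y A = 1 := by
            have h := hinv ∅
            simp only [Finset.empty_subset, if_true] at h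
            rw [h, hy0]
          rw [h1, mul_one]
end

section
/- (Lovász sandwich theorem) Let Γ = (V, E) be a finite simple graph on n vertices and define the theta number ϑ(Γ) = max{ ⟨X, J⟩ : X ∈ ℝ^{n×n} symmetric positive semidefinite, trace(X) = 1, X_{ij} = 0 for all edges {i,j} ∈ E }, where J is the all-one matrix and ⟨X, J⟩ = Σ_{i,j} X_{ij}. Then α(Γ) ≤ ϑ(Γ) ≤ χ(Γ̄), where α(Γ) is the independence number of Γ and χ(Γ̄) is the chromatic number of the complement graph Γ̄. -/
open Matrix

/-- Quadratic form nonnegativity for real PSD matrices, in summation form. -/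
lemma psd_quad {n : ℕ} {X : Matrix (Fin n) (Fin n) ℝ} (hX : X.PosSemidef)
    (w : Fin n → ℝ) : 0 ≤ ∑ i, ∑ j, w i * (X i j * w j) := by
  have h := hX.dotProduct_mulVec_nonneg w
  simpa [dotProduct, Matrix.mulVec, Finset.mul_sum] using h

/-- Lovász sandwich theorem: if `a` is the independence number
of `Γ`, `θ` is the optimal value of the semidefinite program defining the
Lovász theta number of `Γ`, and `c` is the chromatic number of the complement
of `Γ`, then `a ≤ θ ≤ c`. -/
theorem lovasz_sandwich {n : ℕ} (Γ : SimpleGraph (Fin n))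
    (a c : ℕ) (θ : ℝ)
    (ha : IsGreatest
      {k : ℕ | ∃ s : Finset (Fin n), (∀ u ∈ s, ∀ v ∈ s, ¬ Γ.Adj u v) ∧ s.card = k} a)
    (hθ : IsGreatest
      {r : ℝ | ∃ X : Matrix (Fin n) (Fin n) ℝ, X.PosSemidef ∧ X.trace = 1 ∧
        (∀ i j, Γ.Adj i j → X i j = 0) ∧ r = ∑ i, ∑ j, X i j} θ)
    (hc : Γᶜ.chromaticNumber = (c : ℕ∞)) :
    (a : ℝ) ≤ θ ∧ θ ≤ (c : ℝ) := by
  -- handle the degenerate case n = 0 via infeasibility of the SDP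
  rcases Nat.eq_zero_or_pos n with hn | hn
  · exfalso
    obtain ⟨X, hX, htr, _, _⟩ := hθ.1
    subst hn
    have : X.trace = 0 := by simp [Matrix.trace]
    rw [htr] at this
    norm_num at this
  constructor
  · -- a ≤ θ
    obtain ⟨s, hs, hcard⟩ := ha.1
    have hapos : 0 < a := by
      have h1 : (1 : ℕ) ∈ {k : ℕ | ∃ s : Finset (Fin n),
          (∀ u ∈ s, ∀ v ∈ s, ¬ Γ.Adj u v) ∧ s.card = k} := by
        refine ⟨{⟨0, hn⟩}, ?_, by simp⟩
        intro u hu v hv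
        simp only [Finset.mem_singleton] at hu hv
        subst hu; subst hv
        exact Γ.irrefl
      have := ha.2 h1
      omega
    have hane : (a : ℝ) ≠ 0 := Nat.cast_ne_zero.mpr hapos.ne'
    set v : Fin n → ℝ := fun i => if i ∈ s then 1 else 0 with hv
    set X : Matrix (Fin n) (Fin n) ℝ :=
      Matrix.of (fun i j => (a : ℝ)⁻¹ * (v i * v j)) with hXdef
    have hsum : ∑ i, v i = (a : ℝ) := by
      rw [hv, ← hcard]
      simp [Finset.sum_ite_mem, Finset.univ_inter]
    have hXpsd : X.PosSemidef := by
      refine Matrix.PosSemidef.of_dotProduct_mulVec_nonneg ?_ ?_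
      · ext i j
        simp [hXdef, Matrix.conjTranspose, mul_comm]
      · intro x
        have : (star x) ⬝ᵥ (X *ᵥ x) = (a : ℝ)⁻¹ * (∑ i, v i * x i) ^ 2 := by
          simp only [dotProduct, Matrix.mulVec, hXdef, Matrix.of_apply,
            star_trivial, sq, Finset.mul_sum, Finset.sum_mul]
          rw [Finset.sum_comm]
          congr 1; ext i; congr 1; ext j; ring
        rw [this]
        positivity
    have hXtr : X.trace = 1 := by
      have : ∀ i, X i i = (a : ℝ)⁻¹ * v i := by
        intro i
        simp only [hXdef, Matrix.of_apply, hv]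
        by_cases h : i ∈ s <;> simp [h]
      simp only [Matrix.trace, Matrix.diag, this, ← Finset.mul_sum, hsum]
      field_simp
    have hXedge : ∀ i j, Γ.Adj i j → X i j = 0 := by
      intro i j hij
      simp only [hXdef, Matrix.of_apply, hv]
      by_cases hi : i ∈ s
      · by_cases hj : j ∈ s
        · exact absurd hij (hs i hi j hj)
        · simp [hj]
      · simp [hi]
    have hXsum : (a : ℝ) = ∑ i, ∑ j, X i j := by
      simp only [hXdef, Matrix.of_apply]
      have h2 : ∑ i, ∑ j, (a : ℝ)⁻¹ * (v i * v j)
          = (a : ℝ)⁻¹ * ((∑ i, v i) * (∑ j, v j)) := by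
        rw [Finset.sum_mul_sum, Finset.mul_sum]
        exact Finset.sum_congr rfl fun i _ => by rw [Finset.mul_sum]
      rw [h2, hsum]
      field_simp
    exact hθ.2 ⟨X, hXpsd, hXtr, hXedge, hXsum⟩
  · -- θ ≤ c
    obtain ⟨X, hXpsd, hXtr, hXedge, hθeq⟩ := hθ.1
    have hcol : Γᶜ.Colorable c := SimpleGraph.chromaticNumber_le_iff_colorable.mp hc.le
    obtain ⟨C⟩ := hcol
    have hCadj : ∀ i j : Fin n, i ≠ j → C i = C j → Γ.Adj i j := by
      intro i j hij hC
      by_contra hadj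
      exact C.valid ((SimpleGraph.compl_adj Γ i j).mpr ⟨hij, hadj⟩) hC
    have hcpos : 0 < c := Fin.pos_iff_nonempty.mpr ⟨C ⟨0, hn⟩⟩
    have hcpos' : (0 : ℝ) < c := Nat.cast_pos.mpr hcpos
    set g : Fin n → Fin c → ℝ := fun i k => if C i = k then 1 else 0 with hg
    set w : Fin c → Fin n → ℝ := fun k i => (c : ℝ) * g i k - 1 with hw
    have e1 : ∀ i, ∑ k, g i k = 1 := by
      intro i; simp [hg, Finset.sum_ite_eq]
    have e2 : ∀ i j, ∑ k, g i k * g j k = if C i = C j then 1 else 0 := by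
      intro i j
      simp only [hg, ite_mul, one_mul, zero_mul]
      rw [Finset.sum_ite_eq]
      simp [eq_comm]
    have hkey : ∀ i j, ∑ k, w k i * w k j
        = (c : ℝ)^2 * (if C i = C j then 1 else 0) - c := by
      intro i j
      have expand : ∀ k, w k i * w k j
          = (c : ℝ)^2 * (g i k * g j k) - (c : ℝ) * g i k - (c : ℝ) * g j k + 1 := by
        intro k; simp only [hw]; ring
      simp_rw [expand]
      rw [Finset.sum_add_distrib, Finset.sum_sub_distrib, Finset.sum_sub_distrib,
        ← Finset.mul_sum, ← Finset.mul_sum, ← Finset.mul_sum, e1, e1, e2]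
      simp [Finset.card_univ]
    have hpos : 0 ≤ ∑ k, ∑ i, ∑ j, w k i * (X i j * w k j) :=
      Finset.sum_nonneg fun k _ => psd_quad hXpsd (w k)
    have hT : ∑ i, ∑ j, (if C i = C j then X i j else 0) = 1 := by
      have hinner : ∀ i, ∑ j, (if C i = C j then X i j else 0) = X i i := by
        intro i
        rw [Finset.sum_eq_single i]
        · simp
        · intro j _ hji
          by_cases h : C i = C j
          · simp [h, hXedge i j (hCadj i j (Ne.symm hji) h)]
          · simp [h]
        · simp
      simp_rw [hinner]
      simpa [Matrix.trace, Matrix.diag] using hXtr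
    have hre : ∑ k, ∑ i, ∑ j, w k i * (X i j * w k j)
        = (c : ℝ)^2 - c * θ := by
      calc ∑ k, ∑ i, ∑ j, w k i * (X i j * w k j)
          = ∑ i, ∑ k, ∑ j, w k i * (X i j * w k j) := Finset.sum_comm
        _ = ∑ i, ∑ j, ∑ k, w k i * (X i j * w k j) :=
            Finset.sum_congr rfl fun i _ => Finset.sum_comm
        _ = ∑ i, ∑ j, X i j * ∑ k, w k i * w k j := by
            refine Finset.sum_congr rfl fun i _ => Finset.sum_congr rfl fun j _ => ?_
            rw [Finset.mul_sum]
            exact Finset.sum_congr rfl fun k _ => by ring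
        _ = ∑ i, ∑ j, ((c : ℝ)^2 * (if C i = C j then X i j else 0) - c * X i j) := by
            refine Finset.sum_congr rfl fun i _ => Finset.sum_congr rfl fun j _ => ?_
            rw [hkey]
            by_cases h : C i = C j <;> simp [h] <;> ring
        _ = (c : ℝ)^2 * (∑ i, ∑ j, (if C i = C j then X i j else 0))
              - c * (∑ i, ∑ j, X i j) := by
            simp_rw [Finset.sum_sub_distrib, ← Finset.mul_sum]
        _ = (c : ℝ)^2 - c * θ := by rw [hT, hθeq]; ring
    rw [hre] at hpos
    nlinarith
end

section
/- Let Γ = (V, E) be a finite simple graph on n vertices. Define ϑ'(Γ) = max{ ⟨X, J⟩ : X ∈ ℝ^{n×n} symmetric positive semidefinite, X entrywise nonnegative, trace(X) = 1, X_{ij} = 0 for all edges {i,j} ∈ E } and ϑ(Γ) = max{ ⟨X, J⟩ : X ∈ ℝ^{n×n} symmetric positive semidefinite, trace(X) = 1, X_{ij} = 0 for all edges {i,j} ∈ E }. Then α(Γ) ≤ ϑ'(Γ) ≤ ϑ(Γ), where α(Γ) is the independence number of Γ. -/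
open Matrix

/-- `α(Γ) ≤ ϑ'(Γ) ≤ ϑ(Γ)`, where `ϑ'` is the variant of the
Lovász theta number with an additional entrywise nonnegativity constraint. -/
theorem alpha_le_theta_prime_le_theta {n : ℕ} (Γ : SimpleGraph (Fin n))
    (a : ℕ) (θ' θ : ℝ)
    (ha : IsGreatest
      {k : ℕ | ∃ s : Finset (Fin n), (∀ u ∈ s, ∀ v ∈ s, ¬ Γ.Adj u v) ∧ s.card = k} a)
    (hθ' : IsGreatest
      {r : ℝ | ∃ X : Matrix (Fin n) (Fin n) ℝ, X.PosSemidef ∧ (∀ i j, 0 ≤ X i j) ∧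
        X.trace = 1 ∧ (∀ i j, Γ.Adj i j → X i j = 0) ∧ r = ∑ i, ∑ j, X i j} θ')
    (hθ : IsGreatest
      {r : ℝ | ∃ X : Matrix (Fin n) (Fin n) ℝ, X.PosSemidef ∧
        X.trace = 1 ∧ (∀ i j, Γ.Adj i j → X i j = 0) ∧ r = ∑ i, ∑ j, X i j} θ) :
    (a : ℝ) ≤ θ' ∧ θ' ≤ θ := by
  constructor
  · -- α ≤ θ'
    rcases ha.1 with ⟨s, hind, hcard⟩
    rcases Nat.eq_zero_or_pos a with h0 | hpos
    · rcases hθ'.1 with ⟨X, _, hnn, _, _, hXsum⟩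
      rw [h0]
      simpa [hXsum] using Finset.sum_nonneg fun i _ =>
        Finset.sum_nonneg fun j _ => hnn i j
    · have hapos : (0:ℝ) < a := by exact_mod_cast hpos
      set v : Fin n → ℝ := fun i => if i ∈ s then 1 else 0 with hv
      set X : Matrix (Fin n) (Fin n) ℝ := fun i j => v i * v j / a with hX
      have hvsum : ∑ i, v i = a := by
        rw [hv, ← hcard]
        simp [Finset.sum_ite_mem]
      have hvsq : ∀ i, v i * v i = v i := by
        intro i; by_cases h : i ∈ s <;> simp [hv, h]
      have hmem : (a:ℝ) ∈ {r : ℝ | ∃ X : Matrix (Fin n) (Fin n) ℝ, X.PosSemidef ∧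
          (∀ i j, 0 ≤ X i j) ∧ X.trace = 1 ∧ (∀ i j, Γ.Adj i j → X i j = 0) ∧
          r = ∑ i, ∑ j, X i j} := by
        refine ⟨X, posSemidef_iff_dotProduct_mulVec.mpr ⟨?_, ?_⟩, ?_, ?_, ?_, ?_⟩
        · ext i j; rw [Matrix.conjTranspose_apply]; simp [hX, mul_comm]
        · intro x
          have : (star x) ⬝ᵥ (X *ᵥ x) = (∑ i, v i * x i) ^ 2 / a := by
            simp only [dotProduct, mulVec, star_trivial, hX]
            rw [pow_two, Finset.sum_mul_sum, Finset.sum_div]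
            refine Finset.sum_congr rfl fun i _ => ?_
            rw [Finset.sum_div, Finset.mul_sum]
            refine Finset.sum_congr rfl fun j _ => by ring
          rw [this]
          positivity
        · intro i j
          have h1 : 0 ≤ v i := by by_cases h : i ∈ s <;> simp [hv, h]
          have h2 : 0 ≤ v j := by by_cases h : j ∈ s <;> simp [hv, h]
          rw [hX]; positivity
        · simp only [Matrix.trace, Matrix.diag, hX]
          rw [← Finset.sum_div]
          rw [Finset.sum_congr rfl fun i _ => hvsq i, hvsum]
          field_simp
        · intro i j hadj
          rcases Classical.em (i ∈ s) with hi | hi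
          · rcases Classical.em (j ∈ s) with hj | hj
            · exact absurd hadj (hind i hi j hj)
            · simp [hX, hv, hj]
          · simp [hX, hv, hi]
        · rw [show ∑ i, ∑ j, X i j = (∑ i, v i) * (∑ j, v j) / a by
            simp [hX, Finset.sum_mul_sum, Finset.sum_div]]
          rw [hvsum]
          field_simp
      exact hθ'.2 hmem
  · rcases hθ'.1 with ⟨X, hpsd, _, htr, hedge, hsum⟩
    exact hθ.2 ⟨X, hpsd, htr, hedge, hsum⟩
end

section
/- Let G be a compact topological group acting continuously on a compact topological space M, and let μ be a G-invariant regular Borel probability measure on M. Suppose the action is generously transitive: for all x, y ∈ M there exists g ∈ G with gx = y and gy = x. Then for any two continuous G-invariant functions F, F' : M × M → ℂ (i.e. F(gx, gy) = F(x, y) and F'(gx, gy) = F'(x, y) for all g ∈ G, x, y ∈ M), the convolutions commute: ∫_M F(x, z) F'(z, y) dμ(z) = ∫_M F'(x, z) F(z, y) dμ(z) for all x, y ∈ M. -/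
open MeasureTheory

/-- For a generously transitive continuous action of a compact
group `G` on a compact space `M` with a `G`-invariant regular Borel probability
measure `μ`, convolution of continuous `G`-invariant functions on `M × M` is
commutative. -/
theorem convolution_comm_of_generously_transitive
    {G M : Type*} [Group G] [TopologicalSpace G] [IsTopologicalGroup G] [CompactSpace G]
    [TopologicalSpace M] [CompactSpace M]
    [MulAction G M] [ContinuousSMul G M]
    [MeasurableSpace M] [BorelSpace M]
    (μ : Measure M) [IsProbabilityMeasure μ] [μ.Regular]
    [SMulInvariantMeasure G M μ]
    (htrans : ∀ x y : M, ∃ g : G, g • x = y ∧ g • y = x)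
    (F F' : M → M → ℂ)
    (hF : Continuous fun p : M × M => F p.1 p.2)
    (hF' : Continuous fun p : M × M => F' p.1 p.2)
    (hFinv : ∀ (g : G) (x y : M), F (g • x) (g • y) = F x y)
    (hF'inv : ∀ (g : G) (x y : M), F' (g • x) (g • y) = F' x y)
    (x y : M) :
    ∫ z, F x z * F' z y ∂μ = ∫ z, F' x z * F z y ∂μ := by
  letI : MeasurableSpace G := borel G
  haveI : BorelSpace G := ⟨rfl⟩
  haveI : MeasurableSMul G M := ContinuousSMul.toMeasurableSMul
  -- invariant functions are symmetric
  have hFsymm : ∀ a b : M, F a b = F b a := fun a b => by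
    obtain ⟨g, hg1, hg2⟩ := htrans a b
    rw [← hFinv g a b, hg1, hg2]
  have hF'symm : ∀ a b : M, F' a b = F' b a := fun a b => by
    obtain ⟨g, hg1, hg2⟩ := htrans a b
    rw [← hF'inv g a b, hg1, hg2]
  obtain ⟨g, hgx, hgy⟩ := htrans x y
  calc ∫ z, F x z * F' z y ∂μ
      = ∫ z, F x (g • z) * F' (g • z) y ∂μ :=
        (integral_smul_eq_self (fun z => F x z * F' z y) (g := g)).symm
    _ = ∫ z, F' x z * F z y ∂μ := by
        congr 1; funext z
        have h1 : F x (g • z) = F z y := by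
          calc F x (g • z) = F (g • y) (g • z) := by rw [hgy]
            _ = F y z := hFinv g y z
            _ = F z y := hFsymm y z
        have h2 : F' (g • z) y = F' x z := by
          calc F' (g • z) y = F' (g • z) (g • x) := by rw [hgx]
            _ = F' z x := hF'inv g z x
            _ = F' x z := hF'symm z x
        rw [h1, h2, mul_comm]
end

section
/- Let n ≥ 2, d ≥ 0, s ∈ ℝ with −1 ≤ s < 1. For k = 0, …, d let S_k : ℝ³ → ℝ^{(d+1)×(d+1)} be matrix-valued functions, symmetric under all permutations of their three arguments corresponding to permuting a triple of points (i.e. S_k(u,v,t) = S_k(σ(u,v,t)) for every permutation σ of the three coordinates), such that: (a) for every finite set C ⊆ S^{n−1} and every k, the matrix Σ_{(x,y,z)∈C³} S_k(x·y, y·z, z·x) is symmetric positive semidefinite; (b) S_0(1,1,1) = J, the all-one matrix, and S_k(1,1,1) = 0 for k ≥ 1. Suppose F_0, …, F_d are real symmetric positive semidefinite (d+1)×(d+1) matrices satisfying: (c) Σ_{k=0}^d ⟨F_k, S_k(u,u,1)⟩ ≤ −1/3 for all u ∈ [−1, s]; (d) Σ_{k=0}^d ⟨F_k, S_k(u,v,t)⟩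 ≤ 0 for all u, v, t ∈ [−1, s]. Then every finite set C ⊆ S^{n−1} with x·y ≤ s for all distinct x, y ∈ C satisfies |C| ≤ 1 + ⟨F_0, J⟩. -/
open Matrix


lemma inner_psd_nonneg {m : Type*} [Fintype m] [DecidableEq m]
    {A B : Matrix m m ℝ} (hA : A.PosSemidef) (hB : B.PosSemidef) :
    0 ≤ ∑ i, ∑ j, A i j * B i j := by
  obtain ⟨X, rfl⟩ : ∃ X : Matrix m m ℝ, B = Xᴴ * X := by
    open scoped MatrixOrder in exact CStarAlgebra.nonneg_iff_eq_star_mul_self.mp hB.nonneg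
  have hentry : ∀ i j, (Xᴴ * X) i j = ∑ r, X r i * X r j := by
    intro i j
    simp [Matrix.mul_apply, Matrix.conjTranspose_apply]
  have h : ∑ i, ∑ j, A i j * (Xᴴ * X) i j
      = ∑ r, (fun j => X r j) ⬝ᵥ (A *ᵥ fun j => X r j) := by
    calc ∑ i, ∑ j, A i j * (Xᴴ * X) i j
        = ∑ i, ∑ j, ∑ r, A i j * (X r i * X r j) := by
          simp_rw [hentry, Finset.mul_sum]
      _ = ∑ r, ∑ i, ∑ j, A i j * (X r i * X r j) := by
          have h1 : ∀ i : m, (∑ j, ∑ r, A i j * (X r i * X r j))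
              = ∑ r, ∑ j, A i j * (X r i * X r j) := fun _ => Finset.sum_comm
          simp_rw [h1]
          exact Finset.sum_comm
      _ = ∑ r, (fun j => X r j) ⬝ᵥ (A *ᵥ fun j => X r j) := by
          refine Finset.sum_congr rfl fun r _ => ?_
          simp only [dotProduct, Matrix.mulVec, Finset.mul_sum]
          exact Finset.sum_congr rfl fun i _ =>
            Finset.sum_congr rfl fun j _ => by ring
  rw [h]
  refine Finset.sum_nonneg fun r _ => ?_
  have := hA.dotProduct_mulVec_nonneg (fun j => X r j)
  simpa using this

lemma pull_inner_out {α κ : Type*} [Fintype κ] (s t u : Finset α)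
    (f : α → α → α → κ → ℝ) :
    ∑ x ∈ s, ∑ y ∈ t, ∑ z ∈ u, ∑ k, f x y z k
      = ∑ k, ∑ x ∈ s, ∑ y ∈ t, ∑ z ∈ u, f x y z k := by
  have h1 : ∀ x y, ∑ z ∈ u, ∑ k, f x y z k = ∑ k, ∑ z ∈ u, f x y z k :=
    fun _ _ => Finset.sum_comm
  have h2 : ∀ x, ∑ y ∈ t, ∑ k, ∑ z ∈ u, f x y z k
      = ∑ k, ∑ y ∈ t, ∑ z ∈ u, f x y z k := fun _ => Finset.sum_comm
  simp_rw [h1, h2]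
  exact Finset.sum_comm

/-- The semidefinite programming bound of Bachoc–Vallentin for
spherical codes: if matrices `F 0, …, F d` are positive semidefinite and
satisfy the constraints (c) and (d) with respect to symmetric matrix-valued
functions `S k` satisfying (a) and (b), then every spherical code in `S^{n-1}`
with inner products at most `s` has at most `1 + ⟨F 0, J⟩` elements. -/
theorem sdp_bound_spherical_codes {n d : ℕ} (hn : 2 ≤ n) (s : ℝ)
    (hs : -1 ≤ s) (hs' : s < 1)
    (S : Fin (d + 1) → ℝ → ℝ → ℝ → Matrix (Fin (d + 1)) (Fin (d + 1)) ℝ)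
    (hsym : ∀ (k : Fin (d + 1)) (u v t : ℝ),
      S k u v t = S k v t u ∧ S k u v t = S k u t v)
    (hpsd3 : ∀ (C : Finset (Fin n → ℝ)), (∀ x ∈ C, ∑ i, x i * x i = 1) →
      ∀ k : Fin (d + 1),
        (∑ x ∈ C, ∑ y ∈ C, ∑ z ∈ C,
          S k (∑ i, x i * y i) (∑ i, y i * z i) (∑ i, z i * x i)).PosSemidef)
    (hS0 : S 0 1 1 1 = Matrix.of fun _ _ => (1 : ℝ))
    (hSk : ∀ k : Fin (d + 1), k ≠ 0 → S k 1 1 1 = 0)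
    (F : Fin (d + 1) → Matrix (Fin (d + 1)) (Fin (d + 1)) ℝ)
    (hF : ∀ k, (F k).PosSemidef)
    (hc : ∀ u : ℝ, -1 ≤ u → u ≤ s →
      (∑ k : Fin (d + 1), ∑ i, ∑ j, F k i j * S k u u 1 i j) ≤ -1/3)
    (hd : ∀ u v t : ℝ, -1 ≤ u → u ≤ s → -1 ≤ v → v ≤ s → -1 ≤ t → t ≤ s →
      (∑ k : Fin (d + 1), ∑ i, ∑ j, F k i j * S k u v t i j) ≤ 0)
    (C : Finset (Fin n → ℝ))
    (hCsphere : ∀ x ∈ C, ∑ i, x i * x i = 1)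
    (hCdist : ∀ x ∈ C, ∀ y ∈ C, x ≠ y → ∑ i, x i * y i ≤ s) :
    (C.card : ℝ) ≤ 1 + ∑ i, ∑ j, F 0 i j := by
  classical
  set A : ℝ := ∑ i, ∑ j, F 0 i j with hA
  set N : ℝ := (C.card : ℝ) with hN
  -- A ≥ 0
  have hA0 : 0 ≤ A := by
    have := (hF 0).dotProduct_mulVec_nonneg (fun _ => (1 : ℝ))
    simpa [dotProduct, Matrix.mulVec, hA] using this
  -- lower bound on inner products
  have hlow : ∀ x ∈ C, ∀ y ∈ C, -1 ≤ ∑ i, x i * y i := by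
    intro x hx y hy
    have h0 : 0 ≤ ∑ i, (x i + y i) * (x i + y i) :=
      Finset.sum_nonneg fun i _ => mul_self_nonneg _
    have hexp : ∑ i, (x i + y i) * (x i + y i)
        = (∑ i, x i * x i) + 2 * (∑ i, x i * y i) + ∑ i, y i * y i := by
      rw [Finset.mul_sum, ← Finset.sum_add_distrib, ← Finset.sum_add_distrib]
      exact Finset.sum_congr rfl fun i _ => by ring
    rw [hexp, hCsphere x hx, hCsphere y hy] at h0
    linarith
  -- dot product symmetry
  have hdotc : ∀ x y : Fin n → ℝ, ∑ i, x i * y i = ∑ i, y i * x i :=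
    fun x y => Finset.sum_congr rfl fun i _ => mul_comm _ _
  -- nonnegativity of the full triple sum
  have hnn : 0 ≤ ∑ x ∈ C, ∑ y ∈ C, ∑ z ∈ C, ∑ k : Fin (d+1), ∑ i, ∑ j,
      F k i j * S k (∑ i, x i * y i) (∑ i, y i * z i) (∑ i, z i * x i) i j := by
    have key : ∀ k : Fin (d+1), 0 ≤ ∑ i, ∑ j, ∑ x ∈ C, ∑ y ∈ C, ∑ z ∈ C,
        F k i j * S k (∑ i, x i * y i) (∑ i, y i * z i) (∑ i, z i * x i) i j := by
      intro k
      have := inner_psd_nonneg (hF k) (hpsd3 C hCsphere k)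
      simpa [Matrix.sum_apply, Finset.mul_sum] using this
    calc (0:ℝ) ≤ ∑ k : Fin (d+1), ∑ i, ∑ j, ∑ x ∈ C, ∑ y ∈ C, ∑ z ∈ C,
        F k i j * S k (∑ i, x i * y i) (∑ i, y i * z i) (∑ i, z i * x i) i j :=
          Finset.sum_nonneg fun k _ => key k
      _ = _ := by
          rw [pull_inner_out C C C]
          refine Finset.sum_congr rfl fun k _ => ?_
          rw [pull_inner_out C C C]
          refine Finset.sum_congr rfl fun i _ => ?_
          rw [pull_inner_out C C C]
  -- pointwise bound
  have hpoint : ∀ x ∈ C, ∀ y ∈ C, ∀ z ∈ C,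
      (∑ k : Fin (d+1), ∑ i, ∑ j,
        F k i j * S k (∑ i, x i * y i) (∑ i, y i * z i) (∑ i, z i * x i) i j)
      ≤ (A + 1) * ((if x = y then (1:ℝ) else 0) * (if y = z then (1:ℝ) else 0))
        - (1/3) * (if x = y then (1:ℝ) else 0)
        - (1/3) * (if y = z then (1:ℝ) else 0)
        - (1/3) * (if z = x then (1:ℝ) else 0) := by
    intro x hx y hy z hz
    by_cases hxy : x = y
    · subst hxy
      by_cases hyz : x = z
      · subst hyz
        simp only [if_pos rfl]
        rw [hCsphere x hx]
        have hval : (∑ k : Fin (d+1), ∑ i, ∑ j, F k i j * S k 1 1 1 i j) = A := by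
          rw [Finset.sum_eq_single (0 : Fin (d+1))]
          · rw [hS0]; simp [hA]
          · intro k _ hk; simp [hSk k hk]
          · simp
        rw [hval]; simp only [if_true]; linarith
      · -- x = y, x ≠ z
        have hzx : ¬ (z = x) := fun h => hyz h.symm
        set u : ℝ := ∑ i, x i * z i with hu
        have h1 : ∑ i, z i * x i = u := by rw [hdotc z x]
        have hrw : ∀ k : Fin (d+1), S k 1 u u = S k u u 1 := fun k => (hsym k 1 u u).1
        rw [hCsphere x hx, h1]
        simp only [hrw, if_pos rfl, if_true, if_neg hyz, if_neg hzx]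
        have := hc u (hlow x hx z hz) (hCdist x hx z hz hyz)
        linarith
    · by_cases hyz : y = z
      · subst hyz
        have hzx : ¬ (y = x) := fun h => hxy h.symm
        set u : ℝ := ∑ i, x i * y i with hu
        have h1 : ∑ i, y i * x i = u := by rw [hdotc y x]
        have hrw : ∀ k : Fin (d+1), S k u 1 u = S k u u 1 := fun k => (hsym k u 1 u).2
        rw [hCsphere y hy, h1]
        simp only [hrw, if_pos rfl, if_true, if_neg hxy, if_neg hzx]
        have := hc u (hlow x hx y hy) (hCdist x hx y hy hxy)
        linarith
      · by_cases hzx : z = x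
        · subst hzx
          -- z = x, x ≠ y, y ≠ z(=x)
          set u : ℝ := ∑ i, z i * y i with hu
          have h1 : ∑ i, y i * z i = u := by rw [hdotc y z]
          rw [hCsphere z hz, h1]
          simp only [if_pos rfl, if_true, if_neg hxy, if_neg hyz]
          have := hc u (hlow z hz y hy) (hCdist z hz y hy hxy)
          linarith
        · simp only [if_neg hxy, if_neg hyz, if_neg hzx]
          have := hd (∑ i, x i * y i) (∑ i, y i * z i) (∑ i, z i * x i)
            (hlow x hx y hy) (hCdist x hx y hy hxy)
            (hlow y hy z hz) (hCdist y hy z hz hyz)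
            (hlow z hz x hx) (hCdist z hz x hx hzx)
          linarith
  -- sum of the bound
  have hsumz : ∀ x ∈ C, ∀ y ∈ C, (∑ z ∈ C,
      ((A + 1) * ((if x = y then (1:ℝ) else 0) * (if y = z then (1:ℝ) else 0))
        - (1/3) * (if x = y then (1:ℝ) else 0)
        - (1/3) * (if y = z then (1:ℝ) else 0)
        - (1/3) * (if z = x then (1:ℝ) else 0)))
      = (A + 1) * (if x = y then (1:ℝ) else 0)
        - (N/3) * (if x = y then (1:ℝ) else 0) - 2/3 := by
    intro x hx y hy
    have e1 : ∑ z ∈ C, (if y = z then (1:ℝ) else 0) = 1 := by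
      rw [Finset.sum_ite_eq C y (fun _ => (1:ℝ)), if_pos hy]
    have e2 : ∑ z ∈ C, (if z = x then (1:ℝ) else 0) = 1 := by
      rw [Finset.sum_ite_eq' C x (fun _ => (1:ℝ)), if_pos hx]
    simp only [Finset.sum_sub_distrib, ← Finset.mul_sum, e1, e2,
      Finset.sum_const, nsmul_eq_mul, ← hN]
    ring
  have hsumy : ∀ x ∈ C, (∑ y ∈ C,
      ((A + 1) * (if x = y then (1:ℝ) else 0)
        - (N/3) * (if x = y then (1:ℝ) else 0) - 2/3))
      = (A + 1) - N/3 - (2/3) * N := by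
    intro x hx
    have e1 : ∑ y ∈ C, (if x = y then (1:ℝ) else 0) = 1 := by
      rw [Finset.sum_ite_eq C x (fun _ => (1:ℝ)), if_pos hx]
    simp only [Finset.sum_sub_distrib, ← Finset.mul_sum, e1,
      Finset.sum_const, nsmul_eq_mul, ← hN]
    ring
  have hsumb : (∑ x ∈ C, ∑ y ∈ C, ∑ z ∈ C,
      ((A + 1) * ((if x = y then (1:ℝ) else 0) * (if y = z then (1:ℝ) else 0))
        - (1/3) * (if x = y then (1:ℝ) else 0)
        - (1/3) * (if y = z then (1:ℝ) else 0)
        - (1/3) * (if z = x then (1:ℝ) else 0)))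
      = N * (A + 1) - N^2 := by
    rw [Finset.sum_congr rfl (fun x hx => Finset.sum_congr rfl (fun y hy => hsumz x hx y hy))]
    rw [Finset.sum_congr rfl (fun x hx => hsumy x hx)]
    rw [Finset.sum_const, nsmul_eq_mul, ← hN]
    ring
  have hmain : 0 ≤ N * (A + 1) - N^2 := by
    rw [← hsumb]
    refine le_trans hnn ?_
    refine Finset.sum_le_sum fun x hx => Finset.sum_le_sum fun y hy =>
      Finset.sum_le_sum fun z hz => hpoint x hx y hy z hz
  rcases eq_or_lt_of_le (show (0:ℝ) ≤ N by positivity) with h0 | h0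
  · rw [← h0]; linarith
  · nlinarith
end
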